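/- For all λ > 0, a ∈ (0,1], b > 0, we have ∫₀^∞ e^{a u - b/u} u^{λ-1} Γ(1/2 - λ, u) du = 2√π · ∫_{√(1-a)}^∞ (a + t²)^{-λ - 1/2} e^{-2√b t} dt, where Γ(p, y) denotes the upper incomplete Gamma function. -/

import Mathlib

open MeasureTheory Real Set

/-- Upper incomplete Gamma function `Γ(p, x) = ∫_x^∞ u^(p-1) e^(-u) du`. -/
noncomputable def uGamma (p x : ℝ) : ℝ := ∫ u in Set.Ioi x, u ^ (p - 1) * Real.exp (-u)

lemma g_surj {α c : ℝ} (hα : 0 < α) (hc : 0 < c) (y : ℝ) :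
    ∃ x ∈ Ioi (0:ℝ), α * x - c / x = y := by
  set s := Real.sqrt (y^2 + 4*α*c) with hs
  have hs2 : s^2 = y^2 + 4*α*c := Real.sq_sqrt (by positivity)
  have hsy : |y| < s := by
    rw [← Real.sqrt_sq_eq_abs]
    exact Real.sqrt_lt_sqrt (sq_nonneg y) (by nlinarith)
  have hxpos : 0 < (y + s) / (2*α) := by
    have : -y < s := lt_of_le_of_lt (neg_le_abs y) hsy
    have : 0 < y + s := by linarith
    positivity
  refine ⟨(y + s) / (2*α), hxpos, ?_⟩
  have h2α : (2*α) ≠ 0 := by positivity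
  have hys : y + s ≠ 0 := by
    have : -y < s := lt_of_le_of_lt (neg_le_abs y) hsy
    intro h; linarith
  field_simp
  nlinarith [hs2]

lemma g_image {α c : ℝ} (hα : 0 < α) (hc : 0 < c) :
    (fun x => α * x - c / x) '' Ioi 0 = univ := by
  apply eq_univ_of_forall
  intro y
  obtain ⟨x, hx, hxy⟩ := g_surj hα hc y
  exact ⟨x, hx, hxy⟩

lemma g_inj {α c : ℝ} (hα : 0 < α) (hc : 0 < c) :
    InjOn (fun x => α * x - c / x) (Ioi 0) := by
  have : StrictMonoOn (fun x => α * x - c / x) (Ioi 0) := by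
    intro x hx y hy hxy
    simp only [mem_Ioi] at hx hy
    have h1 : α * x < α * y := by nlinarith
    have h2 : c / y < c / x := div_lt_div_of_pos_left hc hx hxy
    simp only; linarith
  exact this.injOn

lemma g_deriv {α c : ℝ} {x : ℝ} (hx : x ∈ Ioi (0:ℝ)) :
    HasDerivWithinAt (fun x => α * x - c / x) (α + c / x^2) (Ioi 0) x := by
  have hx0 : x ≠ 0 := ne_of_gt hx
  have h1 := ((hasDerivAt_id x).const_mul α).sub ((hasDerivAt_inv hx0).const_mul c)
  have e : (fun x : ℝ => α * x - c / x) = fun x => α * id x - c * x⁻¹ := by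
    funext t; rw [div_eq_mul_inv, id]
  rw [e]
  refine h1.hasDerivWithinAt.congr_deriv ?_
  ring

lemma gauss_integrable {α c : ℝ} (hα : 0 < α) (hc : 0 < c) :
    IntegrableOn (fun x => Real.exp (-(α * x - c / x)^2)) (Ioi 0) := by
  set x₀ := Real.sqrt (c / α) with hx₀def
  have hx₀ : 0 < x₀ := Real.sqrt_pos.2 (by positivity)
  have hx₀sq : x₀^2 = c / α := Real.sq_sqrt (by positivity)
  have hmeas : Measurable (fun x : ℝ => Real.exp (-(α * x - c / x)^2)) := by
    apply Measurable.exp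
    apply Measurable.neg
    exact ((measurable_const.mul measurable_id).sub (measurable_const.div measurable_id)).pow_const 2
  have h1 : IntegrableOn (fun x => Real.exp (-(α * x - c / x)^2)) (Ioc 0 x₀) := by
    apply Integrable.mono' (g := fun _ => (1:ℝ))
    · exact integrableOn_const measure_Ioc_lt_top.ne
    · exact hmeas.aestronglyMeasurable.restrict
    · filter_upwards with x
      rw [norm_of_nonneg (Real.exp_nonneg _)]
      exact Real.exp_le_one_iff.2 (neg_nonpos.2 (sq_nonneg _))
  have h2 : IntegrableOn (fun x => Real.exp (-(α * x - c / x)^2)) (Ioi x₀) := by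
    apply Integrable.mono' (g := fun x => Real.exp (-α^2 * (x - x₀)^2))
    · exact ((integrable_exp_neg_mul_sq (by positivity)).comp_sub_right x₀).integrableOn
    · exact hmeas.aestronglyMeasurable.restrict
    · filter_upwards [ae_restrict_mem measurableSet_Ioi] with x hx
      rw [norm_of_nonneg (Real.exp_nonneg _)]
      apply Real.exp_le_exp.2
      have hxpos : 0 < x := lt_trans hx₀ hx
      have hcx : c / x ≤ c / x₀ := div_le_div_of_nonneg_left hc.le hx₀ hx.le
      have hcx₀ : c / x₀ = α * x₀ := by
        have hax : α * x₀^2 = c := by rw [hx₀sq]; field_simp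
        rw [eq_comm, eq_div_iff (ne_of_gt hx₀)]
        nlinarith [hax]
      have hg : α * (x - x₀) ≤ α * x - c / x := by
        rw [mul_sub]; linarith [hcx₀ ▸ hcx]
      have hg0 : 0 ≤ α * (x - x₀) := by
        have : x₀ ≤ x := hx.le
        nlinarith
      have : (α * (x - x₀))^2 ≤ (α * x - c / x)^2 := by nlinarith
      nlinarith [this]
  have : Ioi (0:ℝ) = Ioc 0 x₀ ∪ Ioi x₀ := (Ioc_union_Ioi_eq_Ioi hx₀.le).symm
  rw [this]
  exact h1.union h2

lemma h_image {k : ℝ} (hk : 0 < k) : (fun x : ℝ => k / x) '' Ioi 0 = Ioi 0 := by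
  ext y
  constructor
  · rintro ⟨x, hx, rfl⟩
    exact div_pos hk hx
  · intro hy
    exact ⟨k / y, div_pos hk hy, by field_simp⟩

lemma h_inj {k : ℝ} (hk : 0 < k) : InjOn (fun x : ℝ => k / x) (Ioi 0) := by
  intro x hx y hy hxy
  simp only [mem_Ioi] at hx hy
  field_simp at hxy
  exact hxy.symm

lemma h_deriv {k x : ℝ} (hx : x ∈ Ioi (0:ℝ)) :
    HasDerivWithinAt (fun x : ℝ => k / x) (-(k / x^2)) (Ioi 0) x := by
  have hx0 : x ≠ 0 := ne_of_gt hx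
  have h1 := (hasDerivAt_inv hx0).const_mul k
  have e : (fun x : ℝ => k / x) = fun x => k * x⁻¹ := by
    funext t; rw [div_eq_mul_inv]
  rw [e]
  refine h1.hasDerivWithinAt.congr_deriv ?_
  ring

lemma key_B {α c : ℝ} (hα : 0 < α) (hc : 0 < c) :
    ∫ x in Ioi (0:ℝ), Real.exp (-(α * x - c / x)^2) = Real.sqrt π / (2*α) := by
  have hmain : ∫ x in Ioi (0:ℝ), |α + c / x^2| * Real.exp (-(α * x - c / x)^2)
      = Real.sqrt π := by
    have h := integral_image_eq_integral_abs_deriv_smul measurableSet_Ioi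
      (fun x hx => g_deriv (α := α) (c := c) hx) (g_inj hα hc) (fun y => Real.exp (-y^2))
    rw [g_image hα hc] at h
    simp only [smul_eq_mul] at h
    rw [← h, setIntegral_univ]
    have := integral_gaussian 1
    simpa using this
  set k := c / α with hk_def
  have hk : 0 < k := by positivity
  have heqn : ∀ x ∈ Ioi (0:ℝ), |(-(k / x^2))| * Real.exp (-(α * (k/x) - c / (k/x))^2)
      = (c / (α * x^2)) * Real.exp (-(α * x - c / x)^2) := by
    intro x hx
    have hx0 : (0:ℝ) < x := hx
    have h1 : |(-(k / x^2))| = c / (α * x^2) := by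
      rw [abs_neg, abs_of_pos (by positivity), hk_def]
      field_simp
    have h2 : α * (k / x) - c / (k / x) = -(α * x - c / x) := by
      rw [hk_def]
      field_simp
      ring
    rw [h1, h2, neg_sq]
  have hsub : ∫ x in Ioi (0:ℝ), Real.exp (-(α * x - c / x)^2)
      = ∫ x in Ioi (0:ℝ), (c / (α * x^2)) * Real.exp (-(α * x - c / x)^2) := by
    have h := integral_image_eq_integral_abs_deriv_smul measurableSet_Ioi
      (fun x hx => h_deriv (k := k) hx) (h_inj hk)
      (fun y => Real.exp (-(α * y - c / y)^2))
    rw [h_image hk] at h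
    rw [h]
    apply setIntegral_congr_fun measurableSet_Ioi
    intro x hx
    simp only [smul_eq_mul]
    exact heqn x hx
  have I_e := gauss_integrable hα hc
  have I_ch : IntegrableOn (fun x => (c / (α * x^2)) * Real.exp (-(α * x - c / x)^2)) (Ioi 0) := by
    have h := integrableOn_image_iff_integrableOn_abs_deriv_smul measurableSet_Ioi
      (fun x hx => h_deriv (k := k) hx) (h_inj hk)
      (fun y => Real.exp (-(α * y - c / y)^2))
    rw [h_image hk] at h
    have h2 := h.mp I_e
    apply h2.congr_fun ?_ measurableSet_Ioi
    intro x hx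
    simp only [smul_eq_mul]
    exact heqn x hx
  have I_α : IntegrableOn (fun x => α * Real.exp (-(α * x - c / x)^2)) (Ioi 0) :=
    I_e.const_mul α
  have I_c2 : IntegrableOn (fun x => (c / x^2) * Real.exp (-(α * x - c / x)^2)) (Ioi 0) := by
    have h := I_ch.const_mul α
    apply IntegrableOn.congr_fun h ?_ measurableSet_Ioi
    intro x hx
    have hx0 : (0:ℝ) < x := hx
    field_simp
  have hsplit : ∫ x in Ioi (0:ℝ), |α + c / x^2| * Real.exp (-(α * x - c / x)^2)
      = (∫ x in Ioi (0:ℝ), α * Real.exp (-(α * x - c / x)^2))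
        + ∫ x in Ioi (0:ℝ), (c / x^2) * Real.exp (-(α * x - c / x)^2) := by
    rw [← integral_add I_α I_c2]
    apply setIntegral_congr_fun measurableSet_Ioi
    intro x hx
    have hx0 : (0:ℝ) < x := hx
    simp only [abs_of_pos (show (0:ℝ) < α + c / x^2 by positivity)]
    ring
  have e1 : ∫ x in Ioi (0:ℝ), α * Real.exp (-(α * x - c / x)^2)
      = α * ∫ x in Ioi (0:ℝ), Real.exp (-(α * x - c / x)^2) := integral_const_mul α _
  have e2 : ∫ x in Ioi (0:ℝ), (c / x^2) * Real.exp (-(α * x - c / x)^2)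
      = α * ∫ x in Ioi (0:ℝ), Real.exp (-(α * x - c / x)^2) := by
    rw [hsub, ← integral_const_mul]
    apply setIntegral_congr_fun measurableSet_Ioi
    intro x hx
    have hx0 : (0:ℝ) < x := hx
    field_simp
  rw [hsplit, e1, e2] at hmain
  rw [eq_div_iff (by positivity : (2*α : ℝ) ≠ 0)]
  linarith

lemma sq_image : (fun x : ℝ => x^2) '' Ioi 0 = Ioi 0 := by
  ext y
  constructor
  · rintro ⟨x, hx, rfl⟩
    exact pow_pos (mem_Ioi.mp hx) 2
  · intro hy
    exact ⟨Real.sqrt y, Real.sqrt_pos.2 hy, Real.sq_sqrt (le_of_lt hy)⟩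

lemma sq_injOn : InjOn (fun x : ℝ => x^2) (Ioi 0) := by
  intro x hx y hy hxy
  simp only [mem_Ioi] at hx hy
  simp only at hxy
  have := congrArg Real.sqrt hxy
  rwa [Real.sqrt_sq hx.le, Real.sqrt_sq hy.le] at this

lemma key_A {p q : ℝ} (hp : 0 < p) (hq : 0 < q) :
    ∫ u in Ioi (0:ℝ), u ^ (-(1/2) : ℝ) * Real.exp (-(p*u) - q/u)
      = Real.sqrt π / Real.sqrt p * Real.exp (-(2 * Real.sqrt (p*q))) := by
  have hsp : 0 < Real.sqrt p := Real.sqrt_pos.2 hp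
  have hsq : 0 < Real.sqrt q := Real.sqrt_pos.2 hq
  have h := integral_image_eq_integral_abs_deriv_smul measurableSet_Ioi
    (fun x hx => ((hasDerivAt_pow 2 x).hasDerivWithinAt : HasDerivWithinAt (fun x : ℝ => x^2) (2 * x^1) (Ioi 0) x))
    sq_injOn (fun u => u ^ (-(1/2) : ℝ) * Real.exp (-(p*u) - q/u))
  rw [sq_image] at h
  simp only [smul_eq_mul] at h
  norm_num at h
  rw [h]
  have heq : ∀ x ∈ Ioi (0:ℝ), 2 * |x| * ((x^2) ^ (-(1/2) : ℝ) * Real.exp (-(p*(x^2)) - q/(x^2)))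
      = (2 * Real.exp (-(2 * Real.sqrt (p*q)))) * Real.exp (-(Real.sqrt p * x - Real.sqrt q / x)^2) := by
    intro x hx
    have hx0 : (0:ℝ) < x := hx
    have h1 : 2 * |x| = 2 * x := by rw [abs_of_pos hx0]
    have h2 : (x^2 : ℝ) ^ (-(1/2) : ℝ) = x⁻¹ := by
      rw [← Real.rpow_natCast x 2, ← Real.rpow_mul hx0.le]
      norm_num
      exact Real.rpow_neg_one x
    have h3 : -(p*(x^2)) - q/(x^2) = -(2 * Real.sqrt (p*q)) + (-(Real.sqrt p * x - Real.sqrt q / x)^2) := by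
      have e1 : Real.sqrt p ^ 2 = p := Real.sq_sqrt hp.le
      have e2 : Real.sqrt q ^ 2 = q := Real.sq_sqrt hq.le
      have e3 : Real.sqrt (p * q) = Real.sqrt p * Real.sqrt q := Real.sqrt_mul hp.le q
      rw [e3]
      field_simp
      linear_combination (x^2*x^2) * e1 + e2
    rw [h1, h2, h3, Real.exp_add]
    field_simp
  rw [setIntegral_congr_fun measurableSet_Ioi heq, integral_const_mul,
    key_B hsp hsq]
  field_simp

lemma mul_image {u : ℝ} (hu : 0 < u) : (fun s : ℝ => u * s) '' Ioi 1 = Ioi u := by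
  ext v
  constructor
  · rintro ⟨s, hs, rfl⟩
    have h1 : (1:ℝ) < s := hs
    have := mul_lt_mul_of_pos_left h1 hu
    simpa using this
  · intro hv
    have hv' : u < v := hv
    refine ⟨v / u, ?_, by field_simp⟩
    rw [mem_Ioi, one_lt_div hu]
    exact hv'

lemma uGamma_eq {lam u : ℝ} (hu : 0 < u) :
    uGamma (1/2 - lam) u
      = u ^ ((1:ℝ)/2 - lam) * ∫ s in Ioi (1:ℝ), s ^ (-(1/2) - lam : ℝ) * Real.exp (-(u*s)) := by
  have hderiv : ∀ s ∈ Ioi (1:ℝ), HasDerivWithinAt (fun s : ℝ => u * s) u (Ioi 1) s := by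
    intro s _
    have := (hasDerivAt_id s).const_mul u
    simpa using this.hasDerivWithinAt
  have hinj : InjOn (fun s : ℝ => u * s) (Ioi 1) := fun x _ y _ hxy =>
    mul_left_cancel₀ (ne_of_gt hu) hxy
  have h := integral_image_eq_integral_abs_deriv_smul measurableSet_Ioi hderiv hinj
    (fun v => v ^ ((1:ℝ)/2 - lam - 1) * Real.exp (-v))
  rw [mul_image hu] at h
  rw [uGamma, h, ← integral_const_mul]
  apply setIntegral_congr_fun measurableSet_Ioi
  intro s hs
  have hs1 : (1:ℝ) < s := hs
  have hs0 : (0:ℝ) < s := by linarith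
  simp only [smul_eq_mul]
  rw [abs_of_pos hu, Real.mul_rpow hu.le hs0.le]
  have key : u * u ^ ((1:ℝ)/2 - lam - 1) = u ^ ((1:ℝ)/2 - lam) := by
    have h2 := Real.rpow_add hu 1 ((1:ℝ)/2 - lam - 1)
    rw [Real.rpow_one] at h2
    rw [← h2]
    congr 1
    ring
  have hexp : ((1:ℝ)/2 - lam - 1) = (-(1/2) - lam : ℝ) := by ring
  rw [← hexp, ← key]
  ring

lemma H_s_integrable {lam u : ℝ} (hu : 0 < u) (hlam : 0 < lam) :
    IntegrableOn (fun s : ℝ => s ^ (-(1/2) - lam : ℝ) * Real.exp (-(u*s))) (Ioi 1) := by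
  apply Integrable.mono' (g := fun s => Real.exp (-u * s))
  · exact exp_neg_integrableOn_Ioi 1 hu
  · apply Measurable.aestronglyMeasurable
    apply Measurable.mul
    · measurability
    · exact ((measurable_const.mul measurable_id).neg).exp
  · filter_upwards [ae_restrict_mem measurableSet_Ioi] with s hs
    have hs1 : (1:ℝ) < s := hs
    have hs0 : (0:ℝ) < s := by linarith
    rw [norm_of_nonneg (by positivity)]
    have h1 : s ^ (-(1/2) - lam : ℝ) ≤ 1 := by
      apply Real.rpow_le_one_of_one_le_of_nonpos hs1.le
      linarith
    have h2 : Real.exp (-(u*s)) = Real.exp (-u * s) := by ring_nf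
    calc s ^ (-(1/2) - lam : ℝ) * Real.exp (-(u*s))
        ≤ 1 * Real.exp (-(u*s)) := by
          apply mul_le_mul_of_nonneg_right h1 (Real.exp_nonneg _)
      _ = Real.exp (-u * s) := by rw [one_mul, h2]

lemma A_integrable {p q : ℝ} (hp : 0 < p) (hq : 0 < q) :
    IntegrableOn (fun u : ℝ => u ^ (-(1/2) : ℝ) * Real.exp (-(p*u) - q/u)) (Ioi 0) := by
  have hmeas : Measurable (fun u : ℝ => u ^ (-(1/2) : ℝ) * Real.exp (-(p*u) - q/u)) := by
    apply Measurable.mul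
    · measurability
    · apply Measurable.exp
      exact ((measurable_const.mul measurable_id).neg).sub (measurable_const.div measurable_id)
  have key_bound : ∀ u : ℝ, 0 < u → u ≤ 1 →
      u ^ (-(1/2) : ℝ) * Real.exp (-(p*u) - q/u) ≤ 1/q := by
    intro u hu hu1
    have h1 : Real.exp (-(p*u) - q/u) ≤ Real.exp (-(q/u)) := by
      apply Real.exp_le_exp.2
      have : 0 ≤ p * u := by positivity
      linarith
    have h2 : Real.exp (-(q/u)) ≤ u / q := by
      have hx : 0 < q / u := by positivity
      have hle : q / u ≤ Real.exp (q / u) := by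
        have := Real.add_one_le_exp (q/u); linarith
      have h3 := one_div_le_one_div_of_le hx hle
      rw [Real.exp_neg, ← one_div]
      calc 1 / Real.exp (q/u) ≤ 1 / (q/u) := h3
        _ = u / q := by rw [one_div_div]
    calc u ^ (-(1/2):ℝ) * Real.exp (-(p*u) - q/u)
        ≤ u ^ (-(1/2):ℝ) * (u / q) :=
          mul_le_mul_of_nonneg_left (h1.trans h2) (Real.rpow_nonneg hu.le _)
      _ = u ^ ((1:ℝ)/2) / q := by
          rw [show u ^ (-(1/2):ℝ) * (u / q) = (u ^ (-(1/2):ℝ) * u) / q by ring]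
          congr 1
          have h3 := Real.rpow_add hu (-(1/2)) 1
          rw [Real.rpow_one] at h3
          rw [← h3]
          norm_num
      _ ≤ 1 / q := by
          gcongr
          exact Real.rpow_le_one hu.le hu1 (by norm_num)
  have h1 : IntegrableOn (fun u : ℝ => u ^ (-(1/2) : ℝ) * Real.exp (-(p*u) - q/u)) (Ioc 0 1) := by
    apply Integrable.mono' (g := fun _ => 1/q)
    · exact integrableOn_const measure_Ioc_lt_top.ne
    · exact hmeas.aestronglyMeasurable.restrict
    · filter_upwards [ae_restrict_mem measurableSet_Ioc] with u hu
      rw [norm_of_nonneg (mul_nonneg (Real.rpow_nonneg hu.1.le _) (Real.exp_nonneg _))]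
      exact key_bound u hu.1 hu.2
  have h2 : IntegrableOn (fun u : ℝ => u ^ (-(1/2) : ℝ) * Real.exp (-(p*u) - q/u)) (Ioi 1) := by
    apply Integrable.mono' (g := fun u => Real.exp (-p * u))
    · exact exp_neg_integrableOn_Ioi 1 hp
    · exact hmeas.aestronglyMeasurable.restrict
    · filter_upwards [ae_restrict_mem measurableSet_Ioi] with u hu
      have hu1 : (1:ℝ) < u := hu
      have hu0 : (0:ℝ) < u := by linarith
      rw [norm_of_nonneg (mul_nonneg (Real.rpow_nonneg hu0.le _) (Real.exp_nonneg _))]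
      calc u ^ (-(1/2):ℝ) * Real.exp (-(p*u) - q/u)
          ≤ 1 * Real.exp (-(p*u) - q/u) :=
            mul_le_mul_of_nonneg_right
              (Real.rpow_le_one_of_one_le_of_nonpos hu1.le (by norm_num))
              (Real.exp_nonneg _)
        _ ≤ Real.exp (-p * u) := by
            rw [one_mul]
            apply Real.exp_le_exp.2
            have hqu : 0 ≤ q / u := by positivity
            nlinarith
  rw [show Ioi (0:ℝ) = Ioc 0 1 ∪ Ioi 1 from (Ioc_union_Ioi_eq_Ioi zero_le_one).symm]
  exact h1.union h2

lemma target_integrable {lam a b : ℝ} (hlam : 0 < lam) (ha : 0 < a) (ha1 : a ≤ 1) (hb : 0 < b) :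
    IntegrableOn (fun t : ℝ => (a + t^2) ^ (-lam - 1/2 : ℝ) * Real.exp (-2 * Real.sqrt b * t))
      (Ioi (Real.sqrt (1 - a))) := by
  apply Integrable.mono' (g := fun t => a ^ (-lam - 1/2 : ℝ) * Real.exp (-(2 * Real.sqrt b) * t))
  · exact (exp_neg_integrableOn_Ioi _ (by positivity)).const_mul _
  · apply Measurable.aestronglyMeasurable
    apply Measurable.mul
    · measurability
    · exact ((measurable_const.mul measurable_id)).exp
  · filter_upwards [ae_restrict_mem measurableSet_Ioi] with t ht
    rw [norm_of_nonneg (mul_nonneg (Real.rpow_nonneg (by positivity) _) (Real.exp_nonneg _))]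
    have he : Real.exp (-2 * Real.sqrt b * t) = Real.exp (-(2 * Real.sqrt b) * t) := by ring_nf
    rw [he]
    apply mul_le_mul_of_nonneg_right ?_ (Real.exp_nonneg _)
    apply Real.rpow_le_rpow_of_nonpos ha (by nlinarith [sq_nonneg t]) (by linarith)

noncomputable def G2 (lam a b s : ℝ) : ℝ :=
  s ^ (-(1/2) - lam : ℝ) * (Real.sqrt π / Real.sqrt (s-a) * Real.exp (-(2 * Real.sqrt ((s-a)*b))))

lemma inner_u_lemma {lam a b : ℝ} (hb : 0 < b) {s : ℝ} (hs1 : 1 < s) (hsa : 0 < s - a) :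
    ∫⁻ u in Ioi (0:ℝ), ENNReal.ofReal
        ((u ^ (-(1/2):ℝ) * Real.exp (a*u - b/u)) * (s ^ (-(1/2) - lam : ℝ) * Real.exp (-(u*s))))
      = ENNReal.ofReal (G2 lam a b s) := by
  have hs0 : (0:ℝ) < s := by linarith
  have hsc : (0:ℝ) ≤ s ^ (-(1/2) - lam : ℝ) := Real.rpow_nonneg hs0.le _
  have step : ∀ u ∈ Ioi (0:ℝ),
      ENNReal.ofReal ((u ^ (-(1/2):ℝ) * Real.exp (a*u - b/u)) * (s ^ (-(1/2) - lam : ℝ) * Real.exp (-(u*s))))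
        = ENNReal.ofReal (s ^ (-(1/2) - lam : ℝ)) *
            ENNReal.ofReal (u ^ (-(1/2):ℝ) * Real.exp (-((s-a)*u) - b/u)) := by
    intro u hu
    have hu0 : (0:ℝ) < u := hu
    rw [← ENNReal.ofReal_mul hsc]
    congr 1
    rw [show -((s-a)*u) - b/u = (a*u - b/u) + (-(u*s)) by ring, Real.exp_add]
    ring
  rw [setLIntegral_congr_fun measurableSet_Ioi step]
  rw [lintegral_const_mul' _ _ ENNReal.ofReal_ne_top]
  rw [← ofReal_integral_eq_lintegral_ofReal (A_integrable hsa hb) ?_]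
  · rw [key_A hsa hb, ← ENNReal.ofReal_mul hsc]
    rfl
  · filter_upwards [ae_restrict_mem measurableSet_Ioi] with u hu
    have hu0 : (0:ℝ) < u := hu
    positivity

lemma sq_add_image {a : ℝ} (ha1 : a ≤ 1) :
    (fun t : ℝ => t^2 + a) '' Ioi (Real.sqrt (1-a)) = Ioi 1 := by
  have h1a : (0:ℝ) ≤ 1 - a := by linarith
  ext y
  constructor
  · rintro ⟨t, ht, rfl⟩
    have ht' : Real.sqrt (1-a) < t := ht
    have h0 : 0 ≤ Real.sqrt (1-a) := Real.sqrt_nonneg _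
    have h2 : 1 - a < t^2 := by nlinarith [Real.sq_sqrt h1a]
    simp only [mem_Ioi]
    linarith
  · intro hy
    have hy' : (1:ℝ) < y := hy
    have hya : 0 ≤ y - a := by linarith
    refine ⟨Real.sqrt (y - a), ?_, ?_⟩
    · exact Real.sqrt_lt_sqrt h1a (by linarith)
    · simp only
      rw [Real.sq_sqrt hya]
      ring

lemma sq_add_injOn {a : ℝ} : InjOn (fun t : ℝ => t^2 + a) (Ioi (Real.sqrt (1-a))) := by
  intro x hx y hy hxy
  have hx0 : 0 ≤ x := le_of_lt (lt_of_le_of_lt (Real.sqrt_nonneg _) hx)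
  have hy0 : 0 ≤ y := le_of_lt (lt_of_le_of_lt (Real.sqrt_nonneg _) hy)
  simp only at hxy
  have h : x^2 = y^2 := by linarith
  have := congrArg Real.sqrt h
  rwa [Real.sqrt_sq hx0, Real.sqrt_sq hy0] at this

lemma sq_add_deriv {a r : ℝ} : ∀ t ∈ Ioi r, HasDerivWithinAt (fun t : ℝ => t^2 + a) (2*t) (Ioi r) t := by
  intro t _
  have h := ((hasDerivAt_pow 2 t).add_const a).hasDerivWithinAt (s := Ioi r)
  norm_num at h
  exact h.add_const a

lemma G2_pointwise {lam a b : ℝ} (hb : 0 < b) {t : ℝ} (ht0 : 0 < t) :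
    |2*t| • G2 lam a b (t^2 + a)
      = (2 * Real.sqrt π) * ((a + t^2) ^ (-lam - 1/2 : ℝ) * Real.exp (-2 * Real.sqrt b * t)) := by
  have e0 : t^2 + a - a = t^2 := by ring
  have e1 : Real.sqrt (t^2 + a - a) = t := by rw [e0, Real.sqrt_sq ht0.le]
  have e2 : Real.sqrt ((t^2 + a - a)*b) = t * Real.sqrt b := by
    rw [e0, Real.sqrt_mul (sq_nonneg t), Real.sqrt_sq ht0.le]
  rw [smul_eq_mul, abs_of_pos (by positivity : (0:ℝ) < 2*t), G2, e1, e2]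
  rw [show (-(2 * (t * Real.sqrt b))) = -2 * Real.sqrt b * t by ring]
  rw [show (-(1/2) - lam : ℝ) = -lam - 1/2 by ring, add_comm (t^2) a]
  field_simp

lemma G2_integrable {lam a b : ℝ} (hlam : 0 < lam) (ha0 : 0 < a) (ha1 : a ≤ 1) (hb : 0 < b) :
    IntegrableOn (G2 lam a b) (Ioi 1) := by
  have h := integrableOn_image_iff_integrableOn_abs_deriv_smul measurableSet_Ioi
    (sq_add_deriv (a := a) (r := Real.sqrt (1-a))) sq_add_injOn (G2 lam a b)
  rw [sq_add_image ha1] at h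
  rw [h]
  apply IntegrableOn.congr_fun ((target_integrable hlam ha0 ha1 hb).const_mul (2 * Real.sqrt π)) ?_ measurableSet_Ioi
  intro t ht
  have ht0 : 0 < t := lt_of_le_of_lt (Real.sqrt_nonneg _) ht
  exact (G2_pointwise hb ht0).symm

lemma G2_CoV {lam a b : ℝ} (hlam : 0 < lam) (ha0 : 0 < a) (ha1 : a ≤ 1) (hb : 0 < b) :
    ∫ s in Ioi (1:ℝ), G2 lam a b s
      = 2 * Real.sqrt π *
          ∫ t in Ioi (Real.sqrt (1-a)), (a + t^2) ^ (-lam - 1/2 : ℝ) * Real.exp (-2 * Real.sqrt b * t) := by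
  have h := integral_image_eq_integral_abs_deriv_smul measurableSet_Ioi
    (sq_add_deriv (a := a) (r := Real.sqrt (1-a))) sq_add_injOn (G2 lam a b)
  rw [sq_add_image ha1] at h
  rw [h, ← integral_const_mul]
  apply setIntegral_congr_fun measurableSet_Ioi
  intro t ht
  have ht0 : 0 < t := lt_of_le_of_lt (Real.sqrt_nonneg _) ht
  exact G2_pointwise hb ht0

theorem integral_uGamma_eq (lam a b : ℝ) (hlam : 0 < lam) (ha : a ∈ Set.Ioc (0:ℝ) 1)
    (hb : 0 < b) :
    ∫ u in Set.Ioi (0:ℝ), Real.exp (a * u - b / u) * u ^ (lam - 1) * uGamma (1 / 2 - lam) u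
      = 2 * Real.sqrt Real.pi *
        ∫ t in Set.Ioi (Real.sqrt (1 - a)),
          (a + t ^ 2) ^ (-lam - 1 / 2) * Real.exp (-2 * Real.sqrt b * t) := by
  obtain ⟨ha0, ha1⟩ := ha
  have step1 : ∀ u ∈ Ioi (0:ℝ),
      Real.exp (a * u - b / u) * u ^ (lam - 1) * uGamma (1 / 2 - lam) u
        = ∫ s in Ioi (1:ℝ),
            (u ^ (-(1/2):ℝ) * Real.exp (a*u - b/u)) *
              (s ^ (-(1/2) - lam : ℝ) * Real.exp (-(u*s))) := by
    intro u hu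
    have hu0 : (0:ℝ) < u := hu
    have key : u ^ (lam - 1) * u ^ ((1:ℝ)/2 - lam) = u ^ (-(1/2):ℝ) := by
      rw [← Real.rpow_add hu0]; congr 1; ring
    rw [uGamma_eq hu0, integral_const_mul, ← key]
    ring
  rw [setIntegral_congr_fun measurableSet_Ioi step1]
  have m1 : Measurable (fun x : ℝ => x ^ (-(1/2):ℝ)) := by measurability
  have m2 : Measurable (fun x : ℝ => x ^ (-(1/2) - lam : ℝ)) := by measurability
  have hHmeas : Measurable (fun p : ℝ × ℝ =>
      (p.1 ^ (-(1/2):ℝ) * Real.exp (a*p.1 - b/p.1)) *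
        (p.2 ^ (-(1/2) - lam : ℝ) * Real.exp (-(p.1*p.2)))) :=
    ((m1.comp measurable_fst).mul
        (((measurable_const.mul measurable_fst).sub (measurable_const.div measurable_fst)).exp)).mul
      ((m2.comp measurable_snd).mul ((measurable_fst.mul measurable_snd).neg.exp))
  have hFmeas : AEStronglyMeasurable
      (fun u : ℝ => ∫ s in Ioi (1:ℝ),
        (u ^ (-(1/2):ℝ) * Real.exp (a*u - b/u)) * (s ^ (-(1/2) - lam : ℝ) * Real.exp (-(u*s))))
      (volume.restrict (Ioi 0)) :=
    hHmeas.stronglyMeasurable.integral_prod_right'.aestronglyMeasurable.restrict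
  have inner_int : ∀ u : ℝ, 0 < u → IntegrableOn
      (fun s => (u ^ (-(1/2):ℝ) * Real.exp (a*u - b/u)) *
        (s ^ (-(1/2) - lam : ℝ) * Real.exp (-(u*s)))) (Ioi 1) :=
    fun u hu => (H_s_integrable hu hlam).const_mul _
  have inner_nn : ∀ u : ℝ, 0 < u → (0 ≤ᵐ[volume.restrict (Ioi 1)]
      fun s => (u ^ (-(1/2):ℝ) * Real.exp (a*u - b/u)) *
        (s ^ (-(1/2) - lam : ℝ) * Real.exp (-(u*s)))) := by
    intro u hu
    filter_upwards [ae_restrict_mem measurableSet_Ioi] with s hs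
    have hs0 : (0:ℝ) < s := lt_trans one_pos hs
    positivity
  have Fnn : 0 ≤ᵐ[volume.restrict (Ioi (0:ℝ))]
      (fun u : ℝ => ∫ s in Ioi (1:ℝ),
        (u ^ (-(1/2):ℝ) * Real.exp (a*u - b/u)) * (s ^ (-(1/2) - lam : ℝ) * Real.exp (-(u*s)))) := by
    filter_upwards [ae_restrict_mem measurableSet_Ioi] with u hu
    exact integral_nonneg_of_ae (inner_nn u hu)
  rw [integral_eq_lintegral_of_nonneg_ae Fnn hFmeas]
  have swap1 : (∫⁻ u in Ioi (0:ℝ), ENNReal.ofReal (∫ s in Ioi (1:ℝ),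
        (u ^ (-(1/2):ℝ) * Real.exp (a*u - b/u)) * (s ^ (-(1/2) - lam : ℝ) * Real.exp (-(u*s)))))
      = ∫⁻ s in Ioi (1:ℝ), ENNReal.ofReal (G2 lam a b s) := by
    calc (∫⁻ u in Ioi (0:ℝ), ENNReal.ofReal (∫ s in Ioi (1:ℝ),
            (u ^ (-(1/2):ℝ) * Real.exp (a*u - b/u)) * (s ^ (-(1/2) - lam : ℝ) * Real.exp (-(u*s)))))
        = ∫⁻ u in Ioi (0:ℝ), ∫⁻ s in Ioi (1:ℝ), ENNReal.ofReal
            ((u ^ (-(1/2):ℝ) * Real.exp (a*u - b/u)) * (s ^ (-(1/2) - lam : ℝ) * Real.exp (-(u*s)))) := by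
          apply lintegral_congr_ae
          filter_upwards [ae_restrict_mem measurableSet_Ioi] with u hu
          exact ofReal_integral_eq_lintegral_ofReal (inner_int u hu) (inner_nn u hu)
      _ = ∫⁻ s in Ioi (1:ℝ), ∫⁻ u in Ioi (0:ℝ), ENNReal.ofReal
            ((u ^ (-(1/2):ℝ) * Real.exp (a*u - b/u)) * (s ^ (-(1/2) - lam : ℝ) * Real.exp (-(u*s)))) :=
          lintegral_lintegral_swap (ENNReal.measurable_ofReal.comp hHmeas).aemeasurable
      _ = ∫⁻ s in Ioi (1:ℝ), ENNReal.ofReal (G2 lam a b s) := by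
          apply lintegral_congr_ae
          filter_upwards [ae_restrict_mem measurableSet_Ioi] with s hs
          have hs1 : (1:ℝ) < s := hs
          exact inner_u_lemma hb hs1 (by linarith)
  rw [swap1]
  have G2nn : 0 ≤ᵐ[volume.restrict (Ioi (1:ℝ))] G2 lam a b := by
    filter_upwards [ae_restrict_mem measurableSet_Ioi] with s hs
    have hs0 : (0:ℝ) < s := lt_trans one_pos hs
    rw [G2]
    positivity
  rw [← ofReal_integral_eq_lintegral_ofReal (G2_integrable hlam ha0 ha1 hb) G2nn]
  rw [ENNReal.toReal_ofReal (integral_nonneg_of_ae G2nn)]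
  exact G2_CoV hlam ha0 ha1 hb
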